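/- Let M be a Garside monoid with Garside element Δ, let N be a parabolic submonoid of M, and let Δ_N be the Garside element of N with Div(Δ_N) = Div(Δ) ∩ N. Then for every g ∈ G(M), the left coset g G(N) has a unique minimal element m_N(g) for the partial order ≤_N; furthermore, m_N(g) = φ_g(Δ_N^{|g|}). -/

import Mathlib

namespace PG

variable {M : Type*} [Monoid M]

/-- `LDvd a b` : `a` left-divides `b`. -/
def LDvd (a b : M) : Prop := ∃ c, b = a * c

/-- `RDvd a b` : `a` right-divides `b`. -/
def RDvd (a b : M) : Prop := ∃ c, b = c * a

/-- A monoid is cancellative if `c * a * d = c * b * d` implies `a = b`. -/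
def IsCancellative (M : Type*) [Monoid M] : Prop :=
  ∀ a b c d : M, c * a * d = c * b * d → a = b

/-- A monoid is atomic if it admits a norm `ν : M → ℕ` with `ν a > 0` for `a ≠ 1`
and `ν (a * b) ≥ ν a + ν b`. -/
def IsAtomicMon (M : Type*) [Monoid M] : Prop :=
  ∃ ν : M → ℕ, (∀ a : M, a ≠ 1 → 0 < ν a) ∧ ∀ a b : M, ν a + ν b ≤ ν (a * b)

/-- `m` is the least common multiple of `a` and `b` for left-divisibility. -/
def IsLcmL (a b m : M) : Prop :=
  LDvd a m ∧ LDvd b m ∧ ∀ c : M, LDvd a c → LDvd b c → LDvd m c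

/-- `m` is the least common multiple of `a` and `b` for right-divisibility. -/
def IsLcmR (a b m : M) : Prop :=
  RDvd a m ∧ RDvd b m ∧ ∀ c : M, RDvd a c → RDvd b c → RDvd m c

/-- `d` is the greatest common left-divisor of `a` and `b`. -/
def IsGcdL (a b d : M) : Prop :=
  LDvd d a ∧ LDvd d b ∧ ∀ c : M, LDvd c a → LDvd c b → LDvd c d

/-- `d` is the greatest common right-divisor of `a` and `b`. -/
def IsGcdR (a b d : M) : Prop :=
  RDvd d a ∧ RDvd d b ∧ ∀ c : M, RDvd c a → RDvd c b → RDvd c d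

/-- A preGarside monoid: cancellative, atomic, and any two elements admitting a
common multiple (on the appropriate side) admit a least one. -/
def IsPreGarside (M : Type*) [Monoid M] : Prop :=
  IsCancellative M ∧ IsAtomicMon M ∧
    (∀ a b : M, (∃ c, LDvd a c ∧ LDvd b c) → ∃ m, IsLcmL a b m) ∧
    (∀ a b : M, (∃ c, RDvd a c ∧ RDvd b c) → ∃ m, IsLcmR a b m)

/-- A submonoid is special if it is closed under factors. -/
def IsSpecial (N : Submonoid M) : Prop := ∀ a b : M, a * b ∈ N → a ∈ N ∧ b ∈ N

/-- A (standard) parabolic submonoid: special and closed under all existing lcms. -/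
def IsParabolic (N : Submonoid M) : Prop :=
  IsSpecial N ∧ (∀ a b m : M, a ∈ N → b ∈ N → IsLcmL a b m → m ∈ N) ∧
    ∀ a b m : M, a ∈ N → b ∈ N → IsLcmR a b m → m ∈ N

/-- `b` is a factor of `a`. -/
def Factor (b a : M) : Prop := ∃ c d : M, a = c * b * d

/-- The set of factors of `a`. -/
def Factors (a : M) : Set M := {b | Factor b a}

/-- An element is balanced when its left-divisors and right-divisors coincide. -/
def IsBalanced (a : M) : Prop := {b : M | LDvd b a} = {b : M | RDvd b a}

/-- A Garside element: balanced, and its factors generate the monoid. -/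
def IsGarsideElt (Δ : M) : Prop := IsBalanced Δ ∧ Submonoid.closure (Factors Δ) = ⊤

/-- A Garside monoid: a preGarside monoid possessing a Garside element. -/
def IsGarside (M : Type*) [Monoid M] : Prop := IsPreGarside M ∧ ∃ Δ : M, IsGarsideElt Δ

/-- The factors of `a` computed inside the submonoid `N`. -/
def FactorsIn (N : Submonoid M) (a : M) : Set M :=
  {b | b ∈ N ∧ ∃ c ∈ N, ∃ d ∈ N, a = c * b * d}

/-- `Δ` is a Garside element of the submonoid `N`: it is balanced in `N` and its
factors in `N` generate `N`. -/
def IsGarsideEltIn (N : Submonoid M) (Δ : M) : Prop :=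
  Δ ∈ N ∧ ({b : M | b ∈ N ∧ ∃ c ∈ N, Δ = b * c} = {b : M | b ∈ N ∧ ∃ c ∈ N, Δ = c * b}) ∧
    Submonoid.closure (FactorsIn N Δ) = N

/-- The right coset `g * N` (an `R_N`-class). -/
def RCoset (N : Submonoid M) (g : M) : Set M := {x | ∃ h ∈ N, x = g * h}

/-- The left coset `N * g` (an `L_N`-class). -/
def LCoset (N : Submonoid M) (g : M) : Set M := {x | ∃ h ∈ N, x = h * g}

/-- `RReduces N B A` : the `R_N`-class `B` reduces in one step to the `R_N`-class `A`,
i.e. `A = g₁ N`, `B = g₂ N` with `g₂ ∈ g₁ N` and `g₁ ∉ g₂ N`. -/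
def RReduces (N : Submonoid M) (B A : Set M) : Prop :=
  ∃ g₁ g₂ : M, A = RCoset N g₁ ∧ B = RCoset N g₂ ∧ g₂ ∈ RCoset N g₁ ∧ g₁ ∉ RCoset N g₂

/-- `LReduces N B A` : the `L_N`-class `B` reduces in one step to the `L_N`-class `A`. -/
def LReduces (N : Submonoid M) (B A : Set M) : Prop :=
  ∃ g₁ g₂ : M, A = LCoset N g₁ ∧ B = LCoset N g₂ ∧ g₂ ∈ LCoset N g₁ ∧ g₁ ∉ LCoset N g₂

/-- `N` has the `R` confluence property: the reduction rule on `R_N`-classes is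
Noetherian and locally confluent. -/
def RConfluence (N : Submonoid M) : Prop :=
  (¬ ∃ f : ℕ → Set M, ∀ n : ℕ, RReduces N (f n) (f (n + 1))) ∧
    ∀ C A B : Set M, RReduces N C A → RReduces N C B →
      ∃ D : Set M, Relation.ReflTransGen (RReduces N) A D ∧
        Relation.ReflTransGen (RReduces N) B D

/-- `N` has the `L` confluence property. -/
def LConfluence (N : Submonoid M) : Prop :=
  (¬ ∃ f : ℕ → Set M, ∀ n : ℕ, LReduces N (f n) (f (n + 1))) ∧
    ∀ C A B : Set M, LReduces N C A → LReduces N C B →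
      ∃ D : Set M, Relation.ReflTransGen (LReduces N) A D ∧
        Relation.ReflTransGen (LReduces N) B D

/-- `N` has the confluence property. -/
def Confluence (N : Submonoid M) : Prop := RConfluence N ∧ LConfluence N

/-- The `R_N`-class `C` is minimal: whenever `g` represents `C` and `g = g' * h` with
`h ∈ N`, one has `g' N = C`. -/
def IsMinimalRCoset (N : Submonoid M) (C : Set M) : Prop :=
  (∃ g : M, C = RCoset N g) ∧
    ∀ g g' h : M, h ∈ N → C = RCoset N g → g = g' * h → RCoset N g' = C

/-- The `L_N`-class `C` is minimal. -/
def IsMinimalLCoset (N : Submonoid M) (C : Set M) : Prop :=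
  (∃ g : M, C = LCoset N g) ∧
    ∀ g g' h : M, h ∈ N → C = LCoset N g → g = h * g' → LCoset N g' = C

/-- The set of atoms of `M`. -/
def AtomSet (M : Type*) [Monoid M] : Set M :=
  {a | a ≠ 1 ∧ ∀ b c : M, a = b * c → b = 1 ∨ c = 1}

/-- `|x|` : the least number of factors of `Δ` needed to write `x` as a product. -/
noncomputable def lenFactors (Δ x : M) : ℕ :=
  sInf {k | ∃ l : List M, l.length = k ∧ (∀ y ∈ l, y ∈ Factors Δ) ∧ l.prod = x}

section Amalgam

variable {M₁ M₂ N : Type*} [Monoid M₁] [Monoid M₂] [Monoid N]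

/-- The congruence on the free product `M₁ ∗ M₂` identifying `ι₁ h` with `ι₂ h`
for every `h ∈ N`. -/
def amalgamCon (ι₁ : N →* M₁) (ι₂ : N →* M₂) : Con (Monoid.Coprod M₁ M₂) :=
  conGen fun a b => ∃ h : N, a = Monoid.Coprod.inl (ι₁ h) ∧ b = Monoid.Coprod.inr (ι₂ h)

/-- The amalgamated product `M₁ *_N M₂` : the pushout of `ι₁ : N →* M₁` and
`ι₂ : N →* M₂` in the category of monoids. -/
def Amalgam (ι₁ : N →* M₁) (ι₂ : N →* M₂) : Type _ := (amalgamCon ι₁ ι₂).Quotient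

instance (ι₁ : N →* M₁) (ι₂ : N →* M₂) : Monoid (Amalgam ι₁ ι₂) :=
  inferInstanceAs (Monoid (amalgamCon ι₁ ι₂).Quotient)

/-- The canonical morphism `M₁ →* M₁ *_N M₂`. -/
def amalgamInl (ι₁ : N →* M₁) (ι₂ : N →* M₂) : M₁ →* Amalgam ι₁ ι₂ :=
  (amalgamCon ι₁ ι₂).mk'.comp Monoid.Coprod.inl

/-- The canonical morphism `M₂ →* M₁ *_N M₂`. -/
def amalgamInr (ι₁ : N →* M₁) (ι₂ : N →* M₂) : M₂ →* Amalgam ι₁ ι₂ :=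
  (amalgamCon ι₁ ι₂).mk'.comp Monoid.Coprod.inr

end Amalgam

section Groups

/-- `G`, together with `κ : M →* G`, is the enveloping group `G(M)` of the monoid `M`:
every monoid morphism from `M` to a group factors uniquely through `κ`. -/
def IsEnvelopingGroup (M : Type) [Monoid M] (G : Type) [Group G] (κ : M →* G) : Prop :=
  ∀ (H : Type) [Group H], ∀ f : M →* H, ∃! φ : G →* H, φ.comp κ = f

variable {G : Type*} [Group G]

/-- `(a, b)` is the (right) normal form of `g ∈ G(M)` : `g = a b⁻¹` with `a ∧_R b = 1`. -/
def NormalForm (κ : M →* G) (g : G) (a b : M) : Prop :=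
  g = κ a * (κ b)⁻¹ ∧ ∀ c : M, RDvd c a → RDvd c b → c = 1

/-- The relation `≤_N` on `G(M)` : for `g₁ = a₁ b₁⁻¹` and `g₂ = a₂ b₂⁻¹` in normal form,
`g₁ ≤_N g₂` iff there are `h₁, h₂ ∈ N` and `a ∈ M` with `a₂ = a₁ a`,
`h₂ b₂ = h₁ b₁ a` and `h₂ ∧_L h₁ = h₂ ∧_L (h₁ b₁)`. -/
def leN (κ : M →* G) (N : Submonoid M) (g₁ g₂ : G) : Prop :=
  ∃ a₁ b₁ a₂ b₂ : M, NormalForm κ g₁ a₁ b₁ ∧ NormalForm κ g₂ a₂ b₂ ∧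
    ∃ h₁ ∈ N, ∃ h₂ ∈ N, ∃ a : M, a₂ = a₁ * a ∧ h₂ * b₂ = h₁ * b₁ * a ∧
      ∃ d : M, IsGcdL h₂ h₁ d ∧ IsGcdL h₂ (h₁ * b₁) d

/-- `|g|` for `g ∈ G(M)` : the least number of factors of `Δ` and inverses of such
needed to write `g` as a product. -/
noncomputable def lenSimple (κ : M →* G) (Δ : M) (g : G) : ℕ :=
  sInf {k | ∃ l : List G, l.length = k ∧
    (∀ x ∈ l, ∃ d ∈ Factors Δ, x = κ d ∨ x = (κ d)⁻¹) ∧ l.prod = g}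

/-- `PhiSpec κ Δ ΔN g h m` : `m = φ_g(h)`, where, for `g` with normal form `a b⁻¹`,
`φ_g(h) = a (a ∧_R (h b))⁻¹ (M_N(h b (a ∧_R (h b))⁻¹))⁻¹` and
`M_N(x) = (x ∧_L Δ_N^{|x|})⁻¹ x`. -/
def PhiSpec (κ : M →* G) (Δ ΔN : M) (g : G) (h : M) (m : G) : Prop :=
  ∃ a b c y d z : M,
    NormalForm κ g a b ∧ IsGcdR a (h * b) c ∧ h * b = y * c ∧
    IsGcdL y (ΔN ^ lenFactors Δ y) d ∧ y = d * z ∧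
    m = κ a * (κ c)⁻¹ * (κ z)⁻¹

/-- The restriction of `κ : M →* G` to a submonoid `N`, seen as a morphism onto the
subgroup of `G` generated by the image of `N`. -/
def restrictHom (κ : M →* G) (N : Submonoid M) :
    ↥N →* ↥(Subgroup.closure (κ '' (N : Set M))) :=
  MonoidHom.codRestrict (κ.comp N.subtype) (Subgroup.closure (κ '' (N : Set M)))
    fun x => Subgroup.subset_closure ⟨(x : M), x.2, rfl⟩

end Groups

/-- The family of preGarside monoids of FC type: the smallest family of monoids
containing the Garside monoids and closed under amalgamated products over a common
parabolic submonoid (and under isomorphism). -/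
inductive IsFCType : (M : Type) → [_inst : Monoid M] → Prop where
  | garside : ∀ (M : Type) [Monoid M], IsGarside M → IsFCType M
  | amalgam : ∀ (M₁ M₂ N : Type) [Monoid M₁] [Monoid M₂] [Monoid N]
      (ι₁ : N →* M₁) (ι₂ : N →* M₂),
      Function.Injective ι₁ → Function.Injective ι₂ →
      IsParabolic (MonoidHom.mrange ι₁) → IsParabolic (MonoidHom.mrange ι₂) →
      IsFCType M₁ → IsFCType M₂ → IsFCType (Amalgam ι₁ ι₂)
  | congr : ∀ (M : Type) [Monoid M] (M' : Type) [Monoid M'],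
      (M ≃* M') → IsFCType M → IsFCType M'

/-! ### Auxiliary development for Theorem 4.4 -/

section Aux1
variable {M : Type*} [Monoid M]

theorem canL (hM : IsPreGarside M) {c a b : M} (h : c * a = c * b) : a = b :=
  hM.1 a b c 1 (by simpa using h)

theorem canR (hM : IsPreGarside M) {a b d : M} (h : a * d = b * d) : a = b :=
  hM.1 a b 1 d (by simpa using h)

theorem LDvd.refl (a : M) : LDvd a a := ⟨1, (mul_one a).symm⟩
theorem LDvd.one (a : M) : LDvd 1 a := ⟨a, (one_mul a).symm⟩
theorem LDvd.trans {a b c : M} : LDvd a b → LDvd b c → LDvd a c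
  | ⟨u, hu⟩, ⟨v, hv⟩ => ⟨u * v, by rw [hv, hu, mul_assoc]⟩
theorem ldvd_mul (a c : M) : LDvd a (a * c) := ⟨c, rfl⟩
theorem RDvd.refl (a : M) : RDvd a a := ⟨1, (one_mul a).symm⟩
theorem RDvd.one (a : M) : RDvd 1 a := ⟨a, (mul_one a).symm⟩
theorem RDvd.trans {a b c : M} : RDvd a b → RDvd b c → RDvd a c
  | ⟨u, hu⟩, ⟨v, hv⟩ => ⟨v * u, by rw [hv, hu, mul_assoc]⟩
theorem rdvd_mul (a c : M) : RDvd a (c * a) := ⟨c, rfl⟩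

theorem mul_eq_one_parts (hM : IsPreGarside M) {a b : M} (h : a * b = 1) :
    a = 1 ∧ b = 1 := by
  obtain ⟨ν, hpos, hadd⟩ := hM.2.1
  have h1 : ν (1 : M) = 0 := by have := hadd 1 1; simp only [mul_one] at this; omega
  have h2 : ν a + ν b ≤ 0 := by have := hadd a b; rw [h, h1] at this; omega
  constructor
  · by_contra hc; have := hpos a hc; omega
  · by_contra hc; have := hpos b hc; omega

theorem LDvd.antisymm (hM : IsPreGarside M) {a b : M} (h1 : LDvd a b) (h2 : LDvd b a) :
    a = b := by
  obtain ⟨u, hu⟩ := h1; obtain ⟨v, hv⟩ := h2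
  have h3 : a * (u * v) = a * 1 := by rw [mul_one, ← mul_assoc, ← hu, ← hv]
  have huv := canL hM h3
  have h4 := (mul_eq_one_parts hM huv).1
  rw [hu, h4, mul_one]

theorem RDvd.antisymm (hM : IsPreGarside M) {a b : M} (h1 : RDvd a b) (h2 : RDvd b a) :
    a = b := by
  obtain ⟨u, hu⟩ := h1; obtain ⟨v, hv⟩ := h2
  have h3 : (v * u) * a = 1 * a := by rw [one_mul, mul_assoc, ← hu, ← hv]
  have huv := canR hM h3
  have h4 := (mul_eq_one_parts hM huv).2
  rw [hu, h4, one_mul]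

theorem ldvd_one_eq (hM : IsPreGarside M) {a : M} (h : LDvd a 1) : a = 1 :=
  LDvd.antisymm hM h (LDvd.one a)

theorem exists_isGcdL (hM : IsPreGarside M) (a b : M) : ∃ d, IsGcdL a b d := by
  obtain ⟨ν, hpos, hadd⟩ := hM.2.1
  have hbd : ∀ c, LDvd c a → ν c ≤ ν a := by rintro c ⟨u, rfl⟩; have := hadd c u; omega
  have hne : Set.Nonempty {n | ∃ c, LDvd c a ∧ LDvd c b ∧ ν c = n} :=
    ⟨ν 1, 1, LDvd.one a, LDvd.one b, rfl⟩
  have hbdd : BddAbove {n | ∃ c, LDvd c a ∧ LDvd c b ∧ ν c = n} :=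
    ⟨ν a, by rintro n ⟨c, hca, hcb, rfl⟩; exact hbd c hca⟩
  obtain ⟨d, hda, hdb, hd⟩ := Nat.sSup_mem hne hbdd
  refine ⟨d, hda, hdb, fun c hca hcb => ?_⟩
  obtain ⟨m, hm⟩ := hM.2.2.1 c d ⟨a, hca, hda⟩
  have hma : LDvd m a := hm.2.2 a hca hda
  have hmb : LDvd m b := hm.2.2 b hcb hdb
  have h1 : ν m ≤ sSup {n | ∃ c, LDvd c a ∧ LDvd c b ∧ ν c = n} :=
    le_csSup hbdd ⟨m, hma, hmb, rfl⟩
  obtain ⟨e, he⟩ := hm.2.1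
  have h2 : ν d + ν e ≤ ν m := by rw [he]; exact hadd d e
  have he1 : e = 1 := by by_contra hc; have := hpos e hc; omega
  have hmd : m = d := by rw [he, he1, mul_one]
  exact hmd ▸ hm.1

theorem exists_isGcdR (hM : IsPreGarside M) (a b : M) : ∃ d, IsGcdR a b d := by
  obtain ⟨ν, hpos, hadd⟩ := hM.2.1
  have hbd : ∀ c, RDvd c a → ν c ≤ ν a := by rintro c ⟨u, rfl⟩; have := hadd u c; omega
  have hne : Set.Nonempty {n | ∃ c, RDvd c a ∧ RDvd c b ∧ ν c = n} :=
    ⟨ν 1, 1, RDvd.one a, RDvd.one b, rfl⟩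
  have hbdd : BddAbove {n | ∃ c, RDvd c a ∧ RDvd c b ∧ ν c = n} :=
    ⟨ν a, by rintro n ⟨c, hca, hcb, rfl⟩; exact hbd c hca⟩
  obtain ⟨d, hda, hdb, hd⟩ := Nat.sSup_mem hne hbdd
  refine ⟨d, hda, hdb, fun c hca hcb => ?_⟩
  obtain ⟨m, hm⟩ := hM.2.2.2 c d ⟨a, hca, hda⟩
  have hma : RDvd m a := hm.2.2 a hca hda
  have hmb : RDvd m b := hm.2.2 b hcb hdb
  have h1 : ν m ≤ sSup {n | ∃ c, RDvd c a ∧ RDvd c b ∧ ν c = n} :=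
    le_csSup hbdd ⟨m, hma, hmb, rfl⟩
  obtain ⟨e, he⟩ := hm.2.1
  have h2 : ν e + ν d ≤ ν m := by rw [he]; exact hadd e d
  have he1 : e = 1 := by by_contra hc; have := hpos e hc; omega
  have hmd : m = d := by rw [he, he1, one_mul]
  exact hmd ▸ hm.1

theorem IsGcdL.eq (hM : IsPreGarside M) {a b d d' : M} (h : IsGcdL a b d)
    (h' : IsGcdL a b d') : d = d' :=
  LDvd.antisymm hM (h'.2.2 d h.1 h.2.1) (h.2.2 d' h'.1 h'.2.1)

theorem IsGcdR.eq (hM : IsPreGarside M) {a b d d' : M} (h : IsGcdR a b d)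
    (h' : IsGcdR a b d') : d = d' :=
  RDvd.antisymm hM (h'.2.2 d h.1 h.2.1) (h.2.2 d' h'.1 h'.2.1)

end Aux1
section Aux2
variable {M : Type*} [Monoid M]

theorem ldvd_delta_iff_rdvd {Δ : M} (hΔ : IsGarsideElt Δ) {x : M} :
    LDvd x Δ ↔ RDvd x Δ := by
  have := Set.ext_iff.mp hΔ.1 x; simpa using this

theorem factor_delta_iff {Δ : M} (hΔ : IsGarsideElt Δ) {x : M} :
    Factor x Δ ↔ LDvd x Δ := by
  constructor
  · rintro ⟨c, d, hcd⟩
    have h1 : LDvd (c * x) Δ := ⟨d, hcd⟩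
    have h2 : RDvd (c * x) Δ := (ldvd_delta_iff_rdvd hΔ).1 h1
    have h3 : RDvd x Δ := RDvd.trans (rdvd_mul x c) h2
    exact (ldvd_delta_iff_rdvd hΔ).2 h3
  · rintro ⟨c, hc⟩; exact ⟨1, c, by simpa using hc⟩

theorem ldvd_delta_of_mul_right {Δ : M} (hΔ : IsGarsideElt Δ) {u v : M}
    (h : LDvd (u * v) Δ) : LDvd v Δ :=
  (ldvd_delta_iff_rdvd hΔ).2 (RDvd.trans (rdvd_mul v u) ((ldvd_delta_iff_rdvd hΔ).1 h))

theorem exists_factorization {Δ : M} (hΔ : IsGarsideElt Δ) (x : M) :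
    ∃ l : List M, (∀ s ∈ l, LDvd s Δ) ∧ l.prod = x := by
  have hx : x ∈ Submonoid.closure (Factors Δ) := by rw [hΔ.2]; trivial
  induction hx using Submonoid.closure_induction with
  | mem s hs => exact ⟨[s], by simp [(factor_delta_iff hΔ).1 hs], by simp⟩
  | one => exact ⟨[], by simp, rfl⟩
  | mul y z _ _ hy hz =>
      obtain ⟨l₁, h₁, rfl⟩ := hy; obtain ⟨l₂, h₂, rfl⟩ := hz
      refine ⟨l₁ ++ l₂, ?_, by simp⟩
      intro s hs
      rcases List.mem_append.mp hs with h | h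
      exacts [h₁ s h, h₂ s h]

theorem exists_tau_simple (hM : IsPreGarside M) {Δ : M} (hΔ : IsGarsideElt Δ) {s : M}
    (hs : LDvd s Δ) : ∃ t, s * Δ = Δ * t := by
  obtain ⟨v, hv⟩ := hs
  have hvL : LDvd v Δ := ldvd_delta_of_mul_right hΔ ⟨1, by rw [mul_one]; exact hv⟩
  obtain ⟨t, ht⟩ := hvL
  exact ⟨t, by rw [hv, mul_assoc, ← ht, hv]⟩

theorem exists_sigma_simple (hM : IsPreGarside M) {Δ : M} (hΔ : IsGarsideElt Δ) {s : M}
    (hs : LDvd s Δ) : ∃ t, Δ * s = t * Δ := by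
  obtain ⟨u, hu⟩ := (ldvd_delta_iff_rdvd hΔ).1 hs
  have huL : LDvd u Δ := ⟨s, hu⟩
  obtain ⟨w, hw⟩ := (ldvd_delta_iff_rdvd hΔ).1 huL
  exact ⟨w, by rw [hu, ← mul_assoc, ← hw, hu]⟩

theorem exists_tau (hM : IsPreGarside M) {Δ : M} (hΔ : IsGarsideElt Δ) (x : M) :
    ∃ y, x * Δ = Δ * y := by
  obtain ⟨l, hl, rfl⟩ := exists_factorization hΔ x
  induction l with
  | nil => exact ⟨1, by simp⟩
  | cons s l ih =>
      obtain ⟨y, hy⟩ := ih (fun t ht => hl t (List.mem_cons_of_mem s ht))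
      obtain ⟨t, ht⟩ := exists_tau_simple hM hΔ (hl s (List.mem_cons_self))
      exact ⟨t * y, by rw [List.prod_cons, mul_assoc, hy, ← mul_assoc, ht, mul_assoc]⟩

theorem exists_sigma (hM : IsPreGarside M) {Δ : M} (hΔ : IsGarsideElt Δ) (x : M) :
    ∃ y, Δ * x = y * Δ := by
  obtain ⟨l, hl, rfl⟩ := exists_factorization hΔ x
  induction l with
  | nil => exact ⟨1, by simp⟩
  | cons s l ih =>
      obtain ⟨y, hy⟩ := ih (fun t ht => hl t (List.mem_cons_of_mem s ht))
      obtain ⟨t, ht⟩ := exists_sigma_simple hM hΔ (hl s (List.mem_cons_self))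
      refine ⟨t * y, ?_⟩
      rw [List.prod_cons, ← mul_assoc, ht, mul_assoc, hy, ← mul_assoc]

theorem exists_tau_pow (hM : IsPreGarside M) {Δ : M} (hΔ : IsGarsideElt Δ) (x : M) (k : ℕ) :
    ∃ y, x * Δ ^ k = Δ ^ k * y := by
  induction k generalizing x with
  | zero => exact ⟨x, by simp⟩
  | succ k ih =>
      obtain ⟨y, hy⟩ := exists_tau hM hΔ x
      obtain ⟨z, hz⟩ := ih y
      refine ⟨z, ?_⟩
      rw [pow_succ', ← mul_assoc, hy, mul_assoc, hz, ← mul_assoc, ← pow_succ']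

theorem exists_sigma_pow (hM : IsPreGarside M) {Δ : M} (hΔ : IsGarsideElt Δ) (x : M) (k : ℕ) :
    ∃ y, Δ ^ k * x = y * Δ ^ k := by
  induction k generalizing x with
  | zero => exact ⟨x, by simp⟩
  | succ k ih =>
      obtain ⟨y, hy⟩ := exists_sigma hM hΔ x
      obtain ⟨z, hz⟩ := ih y
      refine ⟨z, ?_⟩
      rw [pow_succ, mul_assoc, hy, ← mul_assoc, hz, mul_assoc, ← pow_succ]

theorem pow_bal_LR (hM : IsPreGarside M) {Δ : M} (hΔ : IsGarsideElt Δ) {x : M} {k : ℕ}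
    (h : LDvd x (Δ ^ k)) : RDvd x (Δ ^ k) := by
  obtain ⟨u, hu⟩ := h
  obtain ⟨v, hv⟩ := exists_sigma_pow hM hΔ u k
  exact ⟨v, canR hM (d := u) (by rw [hv, hu, mul_assoc])⟩

theorem pow_bal_RL (hM : IsPreGarside M) {Δ : M} (hΔ : IsGarsideElt Δ) {x : M} {k : ℕ}
    (h : RDvd x (Δ ^ k)) : LDvd x (Δ ^ k) := by
  obtain ⟨w, hw⟩ := h
  obtain ⟨v, hv⟩ := exists_tau_pow hM hΔ w k
  exact ⟨v, canL hM (c := w) (by rw [hv, hw, mul_assoc])⟩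

theorem ldvd_pow_mono {Δ : M} {j k : ℕ} (h : j ≤ k) : LDvd (Δ ^ j) (Δ ^ k) :=
  ⟨Δ ^ (k - j), by rw [← pow_add]; congr 1; omega⟩

theorem rdvd_pow_mono {Δ : M} {j k : ℕ} (h : j ≤ k) : RDvd (Δ ^ j) (Δ ^ k) :=
  ⟨Δ ^ (k - j), by rw [← pow_add]; congr 1; omega⟩

theorem ldvd_pow_le {Δ x : M} {j k : ℕ} (h : LDvd x (Δ ^ j)) (hjk : j ≤ k) :
    LDvd x (Δ ^ k) := LDvd.trans h (ldvd_pow_mono hjk)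

theorem rdvd_pow_le {Δ x : M} {j k : ℕ} (h : RDvd x (Δ ^ j)) (hjk : j ≤ k) :
    RDvd x (Δ ^ k) := RDvd.trans h (rdvd_pow_mono hjk)

theorem simple_mul_pow (hM : IsPreGarside M) {Δ : M} (hΔ : IsGarsideElt Δ) {s x : M} {k : ℕ}
    (hs : LDvd s Δ) (hx : LDvd x (Δ ^ k)) : LDvd (s * x) (Δ ^ (k + 1)) := by
  obtain ⟨v, hv⟩ := hs
  obtain ⟨u, hu⟩ := hx
  obtain ⟨w, hw⟩ := exists_tau_pow hM hΔ v k
  refine ⟨u * w, ?_⟩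
  calc Δ ^ (k+1) = Δ * Δ ^ k := pow_succ' Δ k
    _ = s * (v * Δ ^ k) := by rw [hv, mul_assoc]
    _ = s * (Δ ^ k * w) := by rw [hw]
    _ = s * (x * (u * w)) := by rw [hu, mul_assoc]
    _ = s * x * (u * w) := by rw [mul_assoc]

theorem prod_ldvd_pow (hM : IsPreGarside M) {Δ : M} (hΔ : IsGarsideElt Δ) (l : List M)
    (h : ∀ s ∈ l, LDvd s Δ) : LDvd l.prod (Δ ^ l.length) := by
  induction l with
  | nil => simpa using LDvd.refl (1 : M)
  | cons s l ih =>
      have := simple_mul_pow hM hΔ (h s (List.mem_cons_self))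
        (ih fun t ht => h t (List.mem_cons_of_mem s ht))
      simpa using this

theorem exists_ldvd_pow (hM : IsPreGarside M) {Δ : M} (hΔ : IsGarsideElt Δ) (x : M) :
    ∃ k, LDvd x (Δ ^ k) := by
  obtain ⟨l, hl, rfl⟩ := exists_factorization hΔ x
  exact ⟨l.length, prod_ldvd_pow hM hΔ l hl⟩

theorem exists_isLcmL (hM : IsPreGarside M) {Δ : M} (hΔ : IsGarsideElt Δ) (a b : M) :
    ∃ m, IsLcmL a b m := by
  obtain ⟨j, hj⟩ := exists_ldvd_pow hM hΔ a
  obtain ⟨k, hk⟩ := exists_ldvd_pow hM hΔ b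
  exact hM.2.2.1 a b ⟨Δ ^ max j k, ldvd_pow_le hj (le_max_left j k),
    ldvd_pow_le hk (le_max_right j k)⟩

theorem exists_isLcmR (hM : IsPreGarside M) {Δ : M} (hΔ : IsGarsideElt Δ) (a b : M) :
    ∃ m, IsLcmR a b m := by
  obtain ⟨j, hj⟩ := exists_ldvd_pow hM hΔ a
  obtain ⟨k, hk⟩ := exists_ldvd_pow hM hΔ b
  exact hM.2.2.2 a b ⟨Δ ^ max j k, pow_bal_LR hM hΔ (ldvd_pow_le hj (le_max_left j k)),
    pow_bal_LR hM hΔ (ldvd_pow_le hk (le_max_right j k))⟩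

end Aux2
section Aux3
variable {M : Type*} [Monoid M]

theorem Ksimple (hM : IsPreGarside M) {Δ : M} (hΔ : IsGarsideElt Δ) {ξ η : M} {k : ℕ}
    (hη : LDvd η Δ) (hco : ∀ c, LDvd c ξ → LDvd c η → c = 1)
    (h : LDvd ξ (η * Δ ^ k)) : LDvd ξ (Δ ^ k) := by
  rcases Nat.eq_zero_or_pos k with hk | hk
  · subst hk; rw [pow_zero] at h ⊢
    rw [hco ξ (LDvd.refl ξ) (by simpa using h)]
    exact LDvd.one 1
  obtain ⟨C, hC⟩ := exists_isLcmL hM hΔ ξ η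
  have hCd : LDvd C (η * Δ ^ k) := hC.2.2 _ h (ldvd_mul η (Δ ^ k))
  obtain ⟨θ, hθ⟩ := hC.2.1
  have hθk : LDvd θ (Δ ^ k) := by
    obtain ⟨w, hw⟩ := hCd
    refine ⟨w, canL hM (c := η) ?_⟩
    rw [hw, hθ, mul_assoc]
  obtain ⟨lam, hlam⟩ := hC.1
  have hlamd : LDvd lam Δ := by
    obtain ⟨y, hy⟩ := exists_tau hM hΔ ξ
    have h1 : LDvd C (ξ * Δ) := hC.2.2 _ (ldvd_mul ξ Δ) (LDvd.trans hη ⟨y, hy⟩)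
    obtain ⟨w, hw⟩ := h1
    refine ⟨w, canL hM (c := ξ) ?_⟩
    rw [hw, hlam, mul_assoc]
  obtain ⟨μ, hμ⟩ := exists_isGcdR hM C (Δ ^ k)
  have hθμ : RDvd θ μ := hμ.2.2 θ ⟨η, hθ⟩ (pow_bal_LR hM hΔ hθk)
  have hlamk : RDvd lam (Δ ^ k) :=
    pow_bal_LR hM hΔ (ldvd_pow_le (j := 1) (by rw [pow_one]; exact hlamd) hk)
  have hlamμ : RDvd lam μ := hμ.2.2 lam ⟨ξ, hlam⟩ hlamk
  obtain ⟨L', hL'⟩ := hμ.1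
  obtain ⟨μ₁, hμ₁⟩ := hlamμ
  obtain ⟨μ₂, hμ₂⟩ := hθμ
  have hξL : ξ = L' * μ₁ := canR hM (d := lam) (by rw [← hlam, hL', hμ₁, ← mul_assoc])
  have hηL : η = L' * μ₂ := canR hM (d := θ) (by rw [← hθ, hL', hμ₂, ← mul_assoc])
  have hL1 : L' = 1 := hco L' ⟨μ₁, hξL⟩ ⟨μ₂, hηL⟩
  have hξμ : LDvd ξ μ := by rw [hξL, hL1, one_mul]; exact ⟨lam, hμ₁⟩
  exact LDvd.trans hξμ (pow_bal_RL hM hΔ hμ.2.1)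

theorem greedy (hM : IsPreGarside M) {Δ : M} (hΔ : IsGarsideElt Δ) {x : M} {k : ℕ}
    (h : LDvd x (Δ ^ (k + 1))) :
    ∃ s y, LDvd s Δ ∧ x = s * y ∧ LDvd y (Δ ^ k) := by
  obtain ⟨s, hs⟩ := exists_isGcdL hM x Δ
  obtain ⟨y, hy⟩ := hs.1
  obtain ⟨t, ht⟩ := hs.2.1
  refine ⟨s, y, hs.2.1, hy, ?_⟩
  have htd : LDvd t Δ := ldvd_delta_of_mul_right hΔ ⟨1, by rw [mul_one]; exact ht⟩
  refine Ksimple hM hΔ htd ?_ ?_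
  · intro c hcy hct
    obtain ⟨e, he⟩ := hcy; obtain ⟨f, hf⟩ := hct
    have h1 : LDvd (s * c) x := ⟨e, by rw [hy, he, ← mul_assoc]⟩
    have h2 : LDvd (s * c) Δ := ⟨f, by rw [ht, hf, ← mul_assoc]⟩
    obtain ⟨g, hg⟩ := hs.2.2 _ h1 h2
    have hcg : c * g = 1 := canL hM (c := s) (by rw [← mul_assoc, ← hg, mul_one])
    exact (mul_eq_one_parts hM hcg).1
  · obtain ⟨u, hu⟩ := h
    refine ⟨u, canL hM (c := s) ?_⟩
    rw [← mul_assoc, ← ht, ← pow_succ', hu, hy, mul_assoc]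

theorem divk (hM : IsPreGarside M) {Δ : M} (hΔ : IsGarsideElt Δ) :
    ∀ (k : ℕ) {x : M}, LDvd x (Δ ^ k) →
      ∃ l : List M, l.length = k ∧ (∀ s ∈ l, LDvd s Δ) ∧ l.prod = x := by
  intro k
  induction k with
  | zero =>
      intro x h; rw [pow_zero] at h
      exact ⟨[], rfl, by simp, (ldvd_one_eq hM h).symm⟩
  | succ k ih =>
      intro x h
      obtain ⟨s, y, hsd, rfl, hyk⟩ := greedy hM hΔ h
      obtain ⟨l, hlen, hall, rfl⟩ := ih hyk
      refine ⟨s :: l, by simp [hlen], ?_, by simp⟩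
      intro t ht; rcases List.mem_cons.mp ht with rfl | ht
      exacts [hsd, hall t ht]

theorem lenFactors_spec {Δ : M} (hΔ : IsGarsideElt Δ) (x : M) :
    ∃ l : List M, l.length = lenFactors Δ x ∧ (∀ s ∈ l, LDvd s Δ) ∧ l.prod = x := by
  have hne : {k | ∃ l : List M, l.length = k ∧ (∀ y ∈ l, y ∈ Factors Δ) ∧ l.prod = x}.Nonempty := by
    obtain ⟨l, hl, rfl⟩ := exists_factorization hΔ x
    exact ⟨l.length, l, rfl, fun y hy => (factor_delta_iff hΔ).2 (hl y hy), rfl⟩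
  obtain ⟨l, h1, h2, h3⟩ := Nat.sInf_mem hne
  exact ⟨l, h1, fun s hs => (factor_delta_iff hΔ).1 (h2 s hs), h3⟩

theorem ldvd_pow_lenFactors (hM : IsPreGarside M) {Δ : M} (hΔ : IsGarsideElt Δ) (x : M) :
    LDvd x (Δ ^ lenFactors Δ x) := by
  obtain ⟨l, hlen, hall, hprod⟩ := lenFactors_spec hΔ x
  have := prod_ldvd_pow hM hΔ l hall
  rwa [hlen, hprod] at this

/-- `rIdx Δ x` : the least `k` with `x ⪯ Δ^k`. -/
noncomputable def rIdx (Δ x : M) : ℕ := sInf {k | LDvd x (Δ ^ k)}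

theorem rIdx_spec (hM : IsPreGarside M) {Δ : M} (hΔ : IsGarsideElt Δ) (x : M) :
    LDvd x (Δ ^ rIdx Δ x) := by
  have hne : {k | LDvd x (Δ ^ k)}.Nonempty := exists_ldvd_pow hM hΔ x
  exact Nat.sInf_mem hne

theorem rIdx_le {Δ x : M} {k : ℕ} (h : LDvd x (Δ ^ k)) : rIdx Δ x ≤ k :=
  Nat.sInf_le h

theorem rIdx_mono_L (hM : IsPreGarside M) {Δ : M} (hΔ : IsGarsideElt Δ) {x y : M}
    (h : LDvd x y) : rIdx Δ x ≤ rIdx Δ y :=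
  rIdx_le (h.trans (rIdx_spec hM hΔ y))

theorem rIdx_mono_R (hM : IsPreGarside M) {Δ : M} (hΔ : IsGarsideElt Δ) {x y : M}
    (h : RDvd x y) : rIdx Δ x ≤ rIdx Δ y :=
  rIdx_le (pow_bal_RL hM hΔ (h.trans (pow_bal_LR hM hΔ (rIdx_spec hM hΔ y))))

theorem rIdx_mul_le (hM : IsPreGarside M) {Δ : M} (hΔ : IsGarsideElt Δ) (x y : M) :
    rIdx Δ (x * y) ≤ rIdx Δ x + rIdx Δ y := by
  obtain ⟨u, hu⟩ := rIdx_spec hM hΔ x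
  obtain ⟨v, hv⟩ := rIdx_spec hM hΔ y
  obtain ⟨w, hw⟩ := exists_tau_pow hM hΔ u (rIdx Δ y)
  apply rIdx_le (k := rIdx Δ x + rIdx Δ y)
  refine ⟨v * w, ?_⟩
  calc Δ ^ (rIdx Δ x + rIdx Δ y) = Δ ^ rIdx Δ x * Δ ^ rIdx Δ y := pow_add Δ _ _
    _ = x * (u * Δ ^ rIdx Δ y) := by rw [hu, mul_assoc]
    _ = x * (Δ ^ rIdx Δ y * w) := by rw [hw]
    _ = x * (y * (v * w)) := by rw [hv, mul_assoc]
    _ = x * y * (v * w) := by rw [mul_assoc]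

theorem rIdx_simple_le {Δ x : M} (h : LDvd x Δ) : rIdx Δ x ≤ 1 :=
  rIdx_le (by rw [pow_one]; exact h)

theorem rIdx_one_le {Δ : M} : rIdx Δ (1 : M) ≤ 0 :=
  rIdx_le ⟨1, by simp⟩

end Aux3
section Aux4
variable {M : Type*} [Monoid M] {N : Submonoid M} {Δ ΔN : M}

theorem setN_LR (hΔN : IsGarsideEltIn N ΔN) {b : M} (hb : b ∈ N) {c : M} (hc : c ∈ N)
    (h : ΔN = b * c) : ∃ e ∈ N, ΔN = e * b := by
  have hmem : b ∈ {b : M | b ∈ N ∧ ∃ c ∈ N, ΔN = b * c} := ⟨hb, c, hc, h⟩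
  rw [hΔN.2.1] at hmem
  exact hmem.2

theorem setN_RL (hΔN : IsGarsideEltIn N ΔN) {b : M} (hb : b ∈ N) {c : M} (hc : c ∈ N)
    (h : ΔN = c * b) : ∃ e ∈ N, ΔN = b * e := by
  have hmem : b ∈ {b : M | b ∈ N ∧ ∃ c ∈ N, ΔN = c * b} := ⟨hb, c, hc, h⟩
  rw [← hΔN.2.1] at hmem
  exact hmem.2

theorem ldvdN_of_factorsIn (hN : IsParabolic N) (hΔN : IsGarsideEltIn N ΔN) {b : M}
    (hb : b ∈ FactorsIn N ΔN) : b ∈ N ∧ ∃ c ∈ N, ΔN = b * c := by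
  obtain ⟨hbN, c, hcN, d, hdN, hcd⟩ := hb
  have hcbN : c * b ∈ N := N.mul_mem hcN hbN
  obtain ⟨e, heN, he⟩ := setN_LR hΔN hcbN hdN (by rw [hcd, mul_assoc])
  obtain ⟨f, hfN, hf⟩ := setN_RL hΔN hbN (N.mul_mem heN hcN) (by rw [he, mul_assoc])
  exact ⟨hbN, f, hfN, hf⟩

theorem divN_iff (hM : IsPreGarside M) (hΔ : IsGarsideElt Δ) (hN : IsParabolic N)
    (hΔN : IsGarsideEltIn N ΔN) (hdiv : FactorsIn N ΔN = Factors Δ ∩ (N : Set M))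
    {b : M} (hb : b ∈ N) : LDvd b ΔN ↔ LDvd b Δ := by
  constructor
  · intro ⟨c, hc⟩
    have hcN : c ∈ N := (hN.1 b c (by rw [← hc]; exact hΔN.1)).2
    have hmem : b ∈ FactorsIn N ΔN := ⟨hb, 1, N.one_mem, c, hcN, by simpa using hc⟩
    rw [hdiv] at hmem
    exact (factor_delta_iff hΔ).1 hmem.1
  · intro hbd
    have hmem : b ∈ FactorsIn N ΔN := by
      rw [hdiv]; exact ⟨(factor_delta_iff hΔ).2 hbd, hb⟩
    obtain ⟨-, c, hcN, hc⟩ := ldvdN_of_factorsIn hN hΔN hmem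
    exact ⟨c, hc⟩

theorem exists_listN (hN : IsParabolic N) (hΔN : IsGarsideEltIn N ΔN) {n : M} (hn : n ∈ N) :
    ∃ l : List M, (∀ s ∈ l, s ∈ N ∧ LDvd s ΔN) ∧ l.prod = n := by
  have hx : n ∈ Submonoid.closure (FactorsIn N ΔN) := by rw [hΔN.2.2]; exact hn
  clear hn
  induction hx using Submonoid.closure_induction with
  | mem s hs =>
      obtain ⟨hsN, c, hcN, hc⟩ := ldvdN_of_factorsIn hN hΔN hs
      exact ⟨[s], by simp [hsN, LDvd]; exact ⟨c, hc⟩, by simp⟩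
  | one => exact ⟨[], by simp, rfl⟩
  | mul y z _ _ hy hz =>
      obtain ⟨l₁, h₁, rfl⟩ := hy; obtain ⟨l₂, h₂, rfl⟩ := hz
      refine ⟨l₁ ++ l₂, ?_, by simp⟩
      intro s hs
      rcases List.mem_append.mp hs with h | h
      exacts [h₁ s h, h₂ s h]

theorem exists_tauN (hM : IsPreGarside M) (hN : IsParabolic N) (hΔN : IsGarsideEltIn N ΔN)
    {n : M} (hn : n ∈ N) : ∃ n' ∈ N, n * ΔN = ΔN * n' := by
  obtain ⟨l, hl, rfl⟩ := exists_listN hN hΔN hn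
  induction l with
  | nil => exact ⟨1, N.one_mem, by simp⟩
  | cons s l ih =>
      have hs := hl s (List.mem_cons_self)
      obtain ⟨y, hyN, hy⟩ := ih (fun t ht => hl t (List.mem_cons_of_mem s ht))
        (list_prod_mem fun t ht => (hl t (List.mem_cons_of_mem s ht)).1)
      obtain ⟨v, hv⟩ := hs.2
      have hvN : v ∈ N := (hN.1 s v (by rw [← hv]; exact hΔN.1)).2
      obtain ⟨t, htN, ht⟩ := setN_RL hΔN hvN hs.1 hv
      refine ⟨t * y, N.mul_mem htN hyN, ?_⟩
      calc (s :: l).prod * ΔN = s * (l.prod * ΔN) := by rw [List.prod_cons, mul_assoc]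
        _ = s * (ΔN * y) := by rw [hy]
        _ = (s * ΔN) * y := by rw [mul_assoc]
        _ = (ΔN * t) * y := by
              have hsd : s * ΔN = ΔN * t := by
                conv_lhs => rw [ht]
                rw [← mul_assoc, ← hv]
              rw [hsd]
        _ = ΔN * (t * y) := by rw [mul_assoc]

theorem exists_sigmaN (hM : IsPreGarside M) (hN : IsParabolic N) (hΔN : IsGarsideEltIn N ΔN)
    {n : M} (hn : n ∈ N) : ∃ n' ∈ N, ΔN * n = n' * ΔN := by
  obtain ⟨l, hl, rfl⟩ := exists_listN hN hΔN hn
  induction l with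
  | nil => exact ⟨1, N.one_mem, by simp⟩
  | cons s l ih =>
      have hs := hl s (List.mem_cons_self)
      obtain ⟨y, hyN, hy⟩ := ih (fun t ht => hl t (List.mem_cons_of_mem s ht))
        (list_prod_mem fun t ht => (hl t (List.mem_cons_of_mem s ht)).1)
      obtain ⟨v, hv⟩ := hs.2
      have hvN : v ∈ N := (hN.1 s v (by rw [← hv]; exact hΔN.1)).2
      obtain ⟨c, hcN, hc⟩ := setN_LR hΔN hs.1 hvN hv
      obtain ⟨e, heN, he⟩ := setN_LR hΔN hcN hs.1 hc
      refine ⟨e * y, N.mul_mem heN hyN, ?_⟩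
      calc ΔN * (s :: l).prod = (ΔN * s) * l.prod := by rw [List.prod_cons, mul_assoc]
        _ = (e * ΔN) * l.prod := by
              have hsd : ΔN * s = e * ΔN := by
                conv_lhs => rw [he]
                rw [mul_assoc, ← hc]
              rw [hsd]
        _ = e * (ΔN * l.prod) := by rw [mul_assoc]
        _ = e * (y * ΔN) := by rw [hy]
        _ = (e * y) * ΔN := by rw [mul_assoc]

theorem exists_tauN_pow (hM : IsPreGarside M) (hN : IsParabolic N) (hΔN : IsGarsideEltIn N ΔN)
    {n : M} (hn : n ∈ N) (k : ℕ) : ∃ n' ∈ N, n * ΔN ^ k = ΔN ^ k * n' := by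
  induction k generalizing n with
  | zero => exact ⟨n, hn, by simp⟩
  | succ k ih =>
      obtain ⟨y, hyN, hy⟩ := exists_tauN hM hN hΔN hn
      obtain ⟨z, hzN, hz⟩ := ih hyN
      refine ⟨z, hzN, ?_⟩
      rw [pow_succ', ← mul_assoc, hy, mul_assoc, hz, ← mul_assoc, ← pow_succ']

theorem exists_sigmaN_pow (hM : IsPreGarside M) (hN : IsParabolic N) (hΔN : IsGarsideEltIn N ΔN)
    {n : M} (hn : n ∈ N) (k : ℕ) : ∃ n' ∈ N, ΔN ^ k * n = n' * ΔN ^ k := by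
  induction k generalizing n with
  | zero => exact ⟨n, hn, by simp⟩
  | succ k ih =>
      obtain ⟨y, hyN, hy⟩ := exists_sigmaN hM hN hΔN hn
      obtain ⟨z, hzN, hz⟩ := ih hyN
      refine ⟨z, hzN, ?_⟩
      rw [pow_succ, mul_assoc, hy, ← mul_assoc, hz, mul_assoc, ← pow_succ]

theorem powN_bal_LR (hM : IsPreGarside M) (hN : IsParabolic N) (hΔN : IsGarsideEltIn N ΔN)
    {x : M} {k : ℕ} (h : LDvd x (ΔN ^ k)) : RDvd x (ΔN ^ k) := by
  obtain ⟨u, hu⟩ := h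
  have huN : u ∈ N := (hN.1 x u (by rw [← hu]; exact N.pow_mem hΔN.1 k)).2
  obtain ⟨v, hvN, hv⟩ := exists_sigmaN_pow hM hN hΔN huN k
  exact ⟨v, canR hM (d := u) (by rw [hv, hu, mul_assoc])⟩

theorem powN_bal_RL (hM : IsPreGarside M) (hN : IsParabolic N) (hΔN : IsGarsideEltIn N ΔN)
    {x : M} {k : ℕ} (h : RDvd x (ΔN ^ k)) : LDvd x (ΔN ^ k) := by
  obtain ⟨w, hw⟩ := h
  have hwN : w ∈ N := (hN.1 w x (by rw [← hw]; exact N.pow_mem hΔN.1 k)).1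
  obtain ⟨v, hvN, hv⟩ := exists_tauN_pow hM hN hΔN hwN k
  exact ⟨v, canL hM (c := w) (by rw [hv, hw, mul_assoc])⟩

theorem simple_mul_powN (hM : IsPreGarside M) (hN : IsParabolic N) (hΔN : IsGarsideEltIn N ΔN)
    {s x : M} {k : ℕ} (hsN : s ∈ N) (hs : LDvd s ΔN) (hx : LDvd x (ΔN ^ k)) :
    LDvd (s * x) (ΔN ^ (k + 1)) := by
  obtain ⟨v, hv⟩ := hs
  have hvN : v ∈ N := (hN.1 s v (by rw [← hv]; exact hΔN.1)).2
  obtain ⟨u, hu⟩ := hx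
  obtain ⟨w, hwN, hw⟩ := exists_tauN_pow hM hN hΔN hvN k
  refine ⟨u * w, ?_⟩
  calc ΔN ^ (k+1) = ΔN * ΔN ^ k := pow_succ' ΔN k
    _ = s * (v * ΔN ^ k) := by rw [hv, mul_assoc]
    _ = s * (ΔN ^ k * w) := by rw [hw]
    _ = s * (x * (u * w)) := by rw [hu, mul_assoc]
    _ = s * x * (u * w) := by rw [mul_assoc]

theorem prod_ldvd_powN (hM : IsPreGarside M) (hN : IsParabolic N) (hΔN : IsGarsideEltIn N ΔN)
    (l : List M) (h : ∀ s ∈ l, s ∈ N ∧ LDvd s ΔN) : LDvd l.prod (ΔN ^ l.length) := by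
  induction l with
  | nil => simpa using LDvd.refl (1 : M)
  | cons s l ih =>
      have hs := h s (List.mem_cons_self)
      have := simple_mul_powN hM hN hΔN hs.1 hs.2
        (ih fun t ht => h t (List.mem_cons_of_mem s ht))
      simpa using this

theorem list_mem_N (hN : IsParabolic N) :
    ∀ (l : List M), l.prod ∈ N → ∀ s ∈ l, s ∈ N := by
  intro l
  induction l with
  | nil => intro _ s hs; simp at hs
  | cons t l ih =>
      intro hmem s hs
      rw [List.prod_cons] at hmem
      have := hN.1 t l.prod hmem
      rcases List.mem_cons.mp hs with rfl | hs
      exacts [this.1, ih this.2 s hs]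

theorem claimB (hM : IsPreGarside M) (hΔ : IsGarsideElt Δ) (hN : IsParabolic N)
    (hΔN : IsGarsideEltIn N ΔN) (hdiv : FactorsIn N ΔN = Factors Δ ∩ (N : Set M))
    {n : M} {k : ℕ} (hn : n ∈ N) (h : LDvd n (Δ ^ k)) : LDvd n (ΔN ^ k) := by
  obtain ⟨l, hlen, hall, hprod⟩ := divk hM hΔ k h
  have hmem := list_mem_N hN l (hprod ▸ hn)
  have : LDvd l.prod (ΔN ^ l.length) :=
    prod_ldvd_powN hM hN hΔN l fun s hs => ⟨hmem s hs,
      (divN_iff hM hΔ hN hΔN hdiv (hmem s hs)).2 (hall s hs)⟩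
  rwa [hlen, hprod] at this

theorem claimB_R (hM : IsPreGarside M) (hΔ : IsGarsideElt Δ) (hN : IsParabolic N)
    (hΔN : IsGarsideEltIn N ΔN) (hdiv : FactorsIn N ΔN = Factors Δ ∩ (N : Set M))
    {n : M} {k : ℕ} (hn : n ∈ N) (h : RDvd n (Δ ^ k)) : RDvd n (ΔN ^ k) :=
  powN_bal_LR hM hN hΔN (claimB hM hΔ hN hΔN hdiv hn (pow_bal_RL hM hΔ h))

theorem exists_rdvd_powN (hM : IsPreGarside M) (hN : IsParabolic N)
    (hΔN : IsGarsideEltIn N ΔN) {n : M} (hn : n ∈ N) : ∃ k, RDvd n (ΔN ^ k) := by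
  obtain ⟨l, hl, rfl⟩ := exists_listN hN hΔN hn
  exact ⟨l.length, powN_bal_LR hM hN hΔN (prod_ldvd_powN hM hN hΔN l hl)⟩

end Aux4

section Frac
variable {M : Type*} [Monoid M]

theorem exists_common_left_mul (hM : IsPreGarside M) {Δ : M} (hΔ : IsGarsideElt Δ) (r s : M) :
    ∃ u v, u * r = v * s := by
  obtain ⟨j, hj⟩ := exists_ldvd_pow hM hΔ r
  obtain ⟨k, hk⟩ := exists_ldvd_pow hM hΔ s
  obtain ⟨u, hu⟩ := pow_bal_LR hM hΔ (ldvd_pow_le hj (le_max_left j k))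
  obtain ⟨v, hv⟩ := pow_bal_LR hM hΔ (ldvd_pow_le hk (le_max_right j k))
  exact ⟨u, v, by rw [← hu, ← hv]⟩

theorem exists_common_right_mul (hM : IsPreGarside M) {Δ : M} (hΔ : IsGarsideElt Δ) (r s : M) :
    ∃ u v, r * u = s * v := by
  obtain ⟨j, hj⟩ := exists_ldvd_pow hM hΔ r
  obtain ⟨k, hk⟩ := exists_ldvd_pow hM hΔ s
  obtain ⟨u, hu⟩ := ldvd_pow_le hj (le_max_left j k)
  obtain ⟨v, hv⟩ := ldvd_pow_le hk (le_max_right j k)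
  exact ⟨u, v, by rw [← hu, ← hv]⟩

end Frac

section Frac2
variable {M : Type} [Monoid M]

noncomputable def oreSetTop (hM : IsPreGarside M) {Δ : M} (hΔ : IsGarsideElt Δ) :
    OreLocalization.OreSet (⊤ : Submonoid M) where
  ore_right_cancel := fun r₁ r₂ s h => ⟨1, by simpa using canR hM h⟩
  oreNum := fun r s => (exists_common_left_mul hM hΔ r (s : M)).choose_spec.choose
  oreDenom := fun r s => ⟨(exists_common_left_mul hM hΔ r (s : M)).choose, trivial⟩
  ore_eq := fun r s => (exists_common_left_mul hM hΔ r (s : M)).choose_spec.choose_spec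

theorem frac_facts (hM : IsPreGarside M) {Δ : M} (hΔ : IsGarsideElt Δ) {G : Type} [Group G]
    (κ : M →* G) (hκ : IsEnvelopingGroup M G κ) :
    Function.Injective κ ∧ (∀ g : G, ∃ a b : M, g = κ a * (κ b)⁻¹) ∧
      ∀ a b c d : M, κ a * (κ b)⁻¹ = κ c * (κ d)⁻¹ →
        ∃ u v, a * u = c * v ∧ b * u = d * v := by
  letI : OreLocalization.OreSet (⊤ : Submonoid M) := oreSetTop hM hΔ
  have hinvF : ∀ x : OreLocalization (⊤ : Submonoid M) M, ∃ y, y * x = 1 := by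
    intro x
    induction x using OreLocalization.ind with
    | _ r s => exact ⟨(s : M) /ₒ ⟨r, trivial⟩, OreLocalization.mul_inv s ⟨r, trivial⟩⟩
  letI : Group (OreLocalization (⊤ : Submonoid M) M) :=
    { (inferInstance : Monoid (OreLocalization (⊤ : Submonoid M) M)) with
      inv := fun x => (hinvF x).choose
      inv_mul_cancel := fun x => (hinvF x).choose_spec }
  set fS : (⊤ : Submonoid M) →* Gˣ :=
    { toFun := fun s => toUnits (κ (s : M))
      map_one' := by ext; simp
      map_mul' := fun a b => by ext; simp } with hfS
  have hf : ∀ s : (⊤ : Submonoid M), κ (s : M) = (fS s : G) := fun s => rfl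
  set Ψ : OreLocalization (⊤ : Submonoid M) M →* G :=
    OreLocalization.universalMulHom κ fS hf with hΨdef
  have hΨ : ∀ r : M, Ψ (OreLocalization.numeratorHom r) = κ r := fun r =>
    OreLocalization.universalMulHom_commutes (f := κ) (fS := fS) (hf := hf) (r := r)
  obtain ⟨Φ, hΦc, hΦu⟩ := hκ (OreLocalization (⊤ : Submonoid M) M)
    OreLocalization.numeratorHom
  have hΦκ : ∀ x : M, Φ (κ x) = OreLocalization.numeratorHom x := fun x =>
    DFunLike.congr_fun hΦc x
  have hΨΦ : ∀ g : G, Ψ (Φ g) = g := by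
    obtain ⟨θ, hθc, hθu⟩ := hκ G κ
    have h1 : (Ψ.comp Φ).comp κ = κ := by
      ext x
      simp only [MonoidHom.comp_apply]
      rw [hΦκ x, hΨ x]
    have h2 := hθu _ h1
    have h3 := hθu (MonoidHom.id G) (by ext x; simp)
    intro g
    calc Ψ (Φ g) = (Ψ.comp Φ) g := rfl
      _ = (MonoidHom.id G) g := by rw [h2, ← h3]
      _ = g := rfl
  have hinj : Function.Injective κ := by
    intro a b h
    have h1 : OreLocalization.numeratorHom (S := (⊤ : Submonoid M)) a
        = OreLocalization.numeratorHom (S := (⊤ : Submonoid M)) b := by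
      rw [← hΦκ a, ← hΦκ b, h]
    rw [OreLocalization.numeratorHom_apply, OreLocalization.numeratorHom_apply,
      OreLocalization.oreDiv_eq_iff] at h1
    obtain ⟨u, v, h2, h3⟩ := h1
    have huv : (u : M) = v := by simpa using h3
    have h4 : (u : M) * b = (u : M) * a := by
      have h2' : (u : M) * b = v * a := h2
      rw [h2', huv]
    exact (canL hM h4).symm
  have h_r2l : ∀ a b : M, ∃ p q : M, p * a = q * b ∧ κ a * (κ b)⁻¹ = (κ p)⁻¹ * κ q := by
    intro a b
    obtain ⟨p, q, hpq⟩ := exists_common_left_mul hM hΔ a b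
    refine ⟨p, q, hpq, ?_⟩
    have h1 : κ p * κ a = κ q * κ b := by rw [← map_mul, ← map_mul, hpq]
    calc κ a * (κ b)⁻¹ = (κ p)⁻¹ * (κ p * κ a) * (κ b)⁻¹ := by group
      _ = (κ p)⁻¹ * (κ q * κ b) * (κ b)⁻¹ := by rw [h1]
      _ = (κ p)⁻¹ * κ q := by group
  have hdiv_eq : ∀ p q : M,
      Φ ((κ p)⁻¹ * κ q) = q /ₒ (⟨p, trivial⟩ : (⊤ : Submonoid M)) := by
    intro p q
    have key : OreLocalization.numeratorHom (S := (⊤ : Submonoid M)) p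
          * (q /ₒ (⟨p, trivial⟩ : (⊤ : Submonoid M)))
        = OreLocalization.numeratorHom (S := (⊤ : Submonoid M)) q := by
      rw [OreLocalization.numeratorHom_apply, OreLocalization.numeratorHom_apply,
        OreLocalization.oreDiv_mul_char p q 1 (⟨p, trivial⟩ : (⊤ : Submonoid M)) 1 1 (by simp)]
      simp
    rw [map_mul, map_inv, hΦκ p, hΦκ q]
    rw [inv_mul_eq_iff_eq_mul]
    exact key.symm
  refine ⟨hinj, ?_, ?_⟩
  · intro g
    obtain ⟨r, s, hrs⟩ : ∃ (r : M) (s : (⊤ : Submonoid M)), Φ g = r /ₒ s :=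
      OreLocalization.ind (fun r s => ⟨r, s, rfl⟩) (Φ g)
    have h1 : g = (κ (s : M))⁻¹ * κ r := by
      have happ := OreLocalization.universalMulHom_apply (f := κ) (fS := fS) (hf := hf)
        (r := r) (s := s)
      have hval : (((fS s)⁻¹ : Gˣ) : G) = (κ (s : M))⁻¹ := by
        simp [hfS]
      rw [← hΨΦ g, hrs, hΨdef, happ, hval]
    obtain ⟨b, a, hba⟩ := exists_common_right_mul hM hΔ r (s : M)
    refine ⟨a, b, ?_⟩
    have h2 : κ r * κ b = κ (s : M) * κ a := by rw [← map_mul, ← map_mul, hba]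
    rw [h1]
    calc (κ (s : M))⁻¹ * κ r
        = (κ (s : M))⁻¹ * (κ r * κ b) * (κ b)⁻¹ := by group
      _ = (κ (s : M))⁻¹ * (κ (s : M) * κ a) * (κ b)⁻¹ := by rw [h2]
      _ = κ a * (κ b)⁻¹ := by group
  · intro a b c d h
    obtain ⟨p, q, hpq, hpql⟩ := h_r2l a b
    obtain ⟨p', q', hpq', hpql'⟩ := h_r2l c d
    have h1 : (κ p)⁻¹ * κ q = (κ p')⁻¹ * κ q' := by rw [← hpql, ← hpql', h]
    have h2 : q /ₒ (⟨p, trivial⟩ : (⊤ : Submonoid M)) = q' /ₒ (⟨p', trivial⟩ : (⊤ : Submonoid M)) := by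
      rw [← hdiv_eq p q, ← hdiv_eq p' q', h1]
    rw [OreLocalization.oreDiv_eq_iff] at h2
    obtain ⟨u, v, h3, h4⟩ := h2
    have h3' : (u : M) * q' = v * q := h3
    have h4' : (u : M) * p' = v * p := by simpa using h4
    have e1 : (u : M) * (q' * b) = (u : M) * (p' * a) := by
      calc (u : M) * (q' * b) = ((u : M) * q') * b := (mul_assoc _ _ _).symm
        _ = (v * q) * b := by rw [h3']
        _ = v * (q * b) := mul_assoc _ _ _
        _ = v * (p * a) := by rw [← hpq]
        _ = (v * p) * a := (mul_assoc _ _ _).symm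
        _ = ((u : M) * p') * a := by rw [← h4']
        _ = (u : M) * (p' * a) := mul_assoc _ _ _
    have e2 : q' * b = p' * a := canL hM e1
    obtain ⟨u₀, v₀, huv₀⟩ := exists_common_right_mul hM hΔ b d
    refine ⟨u₀, v₀, ?_, huv₀⟩
    have e3 : p' * (a * u₀) = p' * (c * v₀) := by
      calc p' * (a * u₀) = (p' * a) * u₀ := (mul_assoc _ _ _).symm
        _ = (q' * b) * u₀ := by rw [← e2]
        _ = q' * (b * u₀) := mul_assoc _ _ _
        _ = q' * (d * v₀) := by rw [huv₀]
        _ = (q' * d) * v₀ := (mul_assoc _ _ _).symm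
        _ = (p' * c) * v₀ := by rw [← hpq']
        _ = p' * (c * v₀) := mul_assoc _ _ _
    exact canL hM e3

end Frac2

section NF
variable {M : Type*} [Monoid M] {G : Type*} [Group G]

theorem exists_nf_of_frac (hM : IsPreGarside M) (κ : M →* G) {g : G} {a b : M}
    (h : g = κ a * (κ b)⁻¹) :
    ∃ a₀ b₀ e : M, a = a₀ * e ∧ b = b₀ * e ∧ NormalForm κ g a₀ b₀ := by
  obtain ⟨e, he⟩ := exists_isGcdR hM a b
  obtain ⟨a₀, ha₀⟩ := he.1
  obtain ⟨b₀, hb₀⟩ := he.2.1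
  refine ⟨a₀, b₀, e, ha₀, hb₀, ?_, ?_⟩
  · rw [h, ha₀, hb₀, map_mul, map_mul]; group
  · intro c hca hcb
    obtain ⟨s, hs⟩ := hca; obtain ⟨t, ht⟩ := hcb
    have h1 : RDvd (c * e) a := ⟨s, by rw [ha₀, hs, mul_assoc]⟩
    have h2 : RDvd (c * e) b := ⟨t, by rw [hb₀, ht, mul_assoc]⟩
    obtain ⟨w, hw⟩ := he.2.2 _ h1 h2
    have h3 : (w * c) * e = 1 * e := by rw [one_mul, mul_assoc, ← hw]
    exact (mul_eq_one_parts hM (canR hM h3)).2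

theorem nf_unique (hM : IsPreGarside M) (κ : M →* G)
    (h3 : ∀ a b c d : M, κ a * (κ b)⁻¹ = κ c * (κ d)⁻¹ →
      ∃ u v, a * u = c * v ∧ b * u = d * v)
    {g : G} {a b c d : M} (h1 : NormalForm κ g a b) (h2 : NormalForm κ g c d) :
    a = c ∧ b = d := by
  obtain ⟨u, v, hau, hbu⟩ := h3 a b c d (h1.1.symm.trans h2.1)
  obtain ⟨w, hw⟩ := exists_isGcdR hM (a * u) (b * u)
  have hwu : w = u := by
    obtain ⟨w', hw'⟩ := hw.2.2 u (rdvd_mul u a) (rdvd_mul u b)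
    have h5 : RDvd w' a := by
      obtain ⟨s, hs⟩ := hw.1
      exact ⟨s, canR hM (d := u) (by rw [mul_assoc, ← hw', ← hs])⟩
    have h6 : RDvd w' b := by
      obtain ⟨s, hs⟩ := hw.2.1
      exact ⟨s, canR hM (d := u) (by rw [mul_assoc, ← hw', ← hs])⟩
    rw [hw', h1.2 w' h5 h6, one_mul]
  have hwv : w = v := by
    have hw2 : IsGcdR (c * v) (d * v) w := by rw [← hau, ← hbu]; exact hw
    obtain ⟨w', hw'⟩ := hw2.2.2 v (rdvd_mul v c) (rdvd_mul v d)
    have h5 : RDvd w' c := by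
      obtain ⟨s, hs⟩ := hw2.1
      exact ⟨s, canR hM (d := v) (by rw [mul_assoc, ← hw', ← hs])⟩
    have h6 : RDvd w' d := by
      obtain ⟨s, hs⟩ := hw2.2.1
      exact ⟨s, canR hM (d := v) (by rw [mul_assoc, ← hw', ← hs])⟩
    rw [hw', h2.2 w' h5 h6, one_mul]
  have huv : u = v := hwu.symm.trans hwv
  constructor
  · exact canR hM (d := u) (by rw [hau, huv])
  · exact canR hM (d := u) (by rw [hbu, huv])

theorem lcm_with_simple (hM : IsPreGarside M) {Δ : M} (hΔ : IsGarsideElt Δ) {s : M} (a : M)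
    (hs : LDvd s Δ) :
    ∃ u v, a * u = s * v ∧ LDvd u Δ ∧ rIdx Δ v ≤ rIdx Δ a := by
  obtain ⟨W, hW⟩ := exists_isLcmL hM hΔ a s
  obtain ⟨u, hu⟩ := hW.1
  obtain ⟨v, hv⟩ := hW.2.1
  refine ⟨u, v, by rw [← hu, ← hv], ?_, ?_⟩
  · obtain ⟨y, hy⟩ := exists_tau hM hΔ a
    have h1 : LDvd W (a * Δ) := hW.2.2 _ (ldvd_mul a Δ) (hs.trans ⟨y, hy⟩)
    obtain ⟨w, hw⟩ := h1
    exact ⟨w, canL hM (c := a) (by rw [hw, hu, mul_assoc])⟩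
  · obtain ⟨z, hz⟩ := exists_tau_pow hM hΔ s (rIdx Δ a)
    have h1 : LDvd W (s * Δ ^ rIdx Δ a) :=
      hW.2.2 _ ((rIdx_spec hM hΔ a).trans ⟨z, hz⟩) (ldvd_mul s _)
    obtain ⟨w, hw⟩ := h1
    exact rIdx_le ⟨w, canL hM (c := s) (by rw [hw, hv, mul_assoc])⟩

theorem len_bound (hM : IsPreGarside M) {Δ : M} (hΔ : IsGarsideElt Δ) (κ : M →* G)
    (hinj : Function.Injective κ)
    (hfrac : ∀ g : G, ∃ a b : M, g = κ a * (κ b)⁻¹)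
    (h3 : ∀ a b c d : M, κ a * (κ b)⁻¹ = κ c * (κ d)⁻¹ →
      ∃ u v, a * u = c * v ∧ b * u = d * v) :
    ∀ l : List G, (∀ x ∈ l, ∃ d : M, LDvd d Δ ∧ (x = κ d ∨ x = (κ d)⁻¹)) →
      ∀ a b, NormalForm κ l.prod a b → rIdx Δ a ≤ l.length ∧ rIdx Δ b ≤ l.length := by
  intro l
  induction l with
  | nil =>
      intro _ a b hnf
      have hab : κ a = κ b := by
        have h := hnf.1
        rw [List.prod_nil] at h
        exact mul_inv_eq_one.mp h.symm
      have ha1 : a = 1 := hnf.2 a (RDvd.refl a) ((hinj hab) ▸ RDvd.refl a)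
      have hb1 : b = 1 := by rw [← hinj hab, ha1]
      rw [ha1, hb1]
      exact ⟨rIdx_one_le, rIdx_one_le⟩
  | cons x l ih =>
      intro hmem a b hnf
      have hl := fun y hy => hmem y (List.mem_cons_of_mem x hy)
      obtain ⟨p, q, hpq⟩ := hfrac l.prod
      obtain ⟨a', b', e', _, _, hnf'⟩ := exists_nf_of_frac hM κ hpq
      obtain ⟨hra', hrb'⟩ := ih hl a' b' hnf'
      obtain ⟨d, hd, hcase⟩ := hmem x (List.mem_cons_self)
      have hlen : (x :: l).length = l.length + 1 := rfl
      rcases hcase with rfl | rfl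
      · have hEq : (κ d :: l).prod = κ (d * a') * (κ b')⁻¹ := by
          rw [List.prod_cons, hnf'.1, map_mul, mul_assoc]
        obtain ⟨a₀, b₀, e, hae, hbe, hnf₀⟩ := exists_nf_of_frac hM κ hEq
        obtain ⟨h1, h2⟩ := nf_unique hM κ h3 hnf hnf₀
        constructor
        · have c1 : rIdx Δ a ≤ rIdx Δ (d * a') := by
            rw [h1]; exact rIdx_mono_L hM hΔ ⟨e, hae⟩
          have c2 := rIdx_mul_le hM hΔ d a'
          have c3 := rIdx_simple_le hd
          rw [hlen]; omega
        · have c1 : rIdx Δ b ≤ rIdx Δ b' := by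
            rw [h2]; exact rIdx_mono_L hM hΔ ⟨e, hbe⟩
          rw [hlen]; omega
      · obtain ⟨u, v, huv, hu, hrv⟩ := lcm_with_simple hM hΔ a' hd
        have hEq : ((κ d)⁻¹ :: l).prod = κ v * (κ (b' * u))⁻¹ := by
          rw [List.prod_cons, hnf'.1, map_mul]
          have h2 : κ a' * κ u = κ d * κ v := by rw [← map_mul, ← map_mul, huv]
          calc (κ d)⁻¹ * (κ a' * (κ b')⁻¹)
              = (κ d)⁻¹ * (κ a' * κ u) * (κ b' * κ u)⁻¹ := by group
            _ = (κ d)⁻¹ * (κ d * κ v) * (κ b' * κ u)⁻¹ := by rw [h2]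
            _ = κ v * (κ b' * κ u)⁻¹ := by group
        obtain ⟨a₀, b₀, e, hae, hbe, hnf₀⟩ := exists_nf_of_frac hM κ hEq
        obtain ⟨h1, h2⟩ := nf_unique hM κ h3 hnf hnf₀
        constructor
        · have c1 : rIdx Δ a ≤ rIdx Δ v := by
            rw [h1]; exact rIdx_mono_L hM hΔ ⟨e, hae⟩
          rw [hlen]; omega
        · have c1 : rIdx Δ b ≤ rIdx Δ (b' * u) := by
            rw [h2]; exact rIdx_mono_L hM hΔ ⟨e, hbe⟩
          have c2 := rIdx_mul_le hM hΔ b' u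
          have c3 := rIdx_simple_le hu
          rw [hlen]; omega

theorem mem_H (hM : IsPreGarside M) {Δ : M} (hΔ : IsGarsideElt Δ) {N : Submonoid M}
    (hN : IsParabolic N) (κ : M →* G) {x : G}
    (hx : x ∈ Subgroup.closure (κ '' (N : Set M))) :
    ∃ p ∈ N, ∃ q ∈ N, x = (κ p)⁻¹ * κ q := by
  induction hx using Subgroup.closure_induction with
  | mem y hy =>
      obtain ⟨n, hnN, rfl⟩ := hy
      exact ⟨1, N.one_mem, n, hnN, by simp⟩
  | one => exact ⟨1, N.one_mem, 1, N.one_mem, by simp⟩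
  | mul y z _ _ hy hz =>
      obtain ⟨p, hp, q, hq, rfl⟩ := hy
      obtain ⟨p', hp', q', hq', rfl⟩ := hz
      obtain ⟨m, hm⟩ := exists_isLcmR hM hΔ q p'
      have hmN : m ∈ N := hN.2.2 q p' m hq hp' hm
      obtain ⟨u, hu⟩ := hm.1
      obtain ⟨v, hv⟩ := hm.2.1
      have huN : u ∈ N := (hN.1 u q (by rw [← hu]; exact hmN)).1
      have hvN : v ∈ N := (hN.1 v p' (by rw [← hv]; exact hmN)).1
      refine ⟨u * p, N.mul_mem huN hp, v * q', N.mul_mem hvN hq', ?_⟩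
      have h1 : κ u * κ q = κ v * κ p' := by rw [← map_mul, ← map_mul, ← hu, ← hv]
      rw [map_mul, map_mul]
      calc (κ p)⁻¹ * κ q * ((κ p')⁻¹ * κ q')
          = (κ p)⁻¹ * ((κ u)⁻¹ * (κ u * κ q) * (κ p')⁻¹) * κ q' := by group
        _ = (κ p)⁻¹ * ((κ u)⁻¹ * (κ v * κ p') * (κ p')⁻¹) * κ q' := by rw [h1]
        _ = (κ u * κ p)⁻¹ * (κ v * κ q') := by group
  | inv y _ hy =>
      obtain ⟨p, hp, q, hq, rfl⟩ := hy
      exact ⟨q, hq, p, hp, by group⟩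

theorem prod_map_inv_reverse (κ : M →* G) :
    ∀ l : List M, ((l.map fun t => (κ t)⁻¹).reverse).prod = (κ l.prod)⁻¹ := by
  intro l
  induction l with
  | nil => simp
  | cons t l ih =>
      simp only [List.map_cons, List.reverse_cons, List.prod_append, ih, List.prod_cons,
        List.prod_nil, mul_one, map_mul, mul_inv_rev]

theorem lenSimple_spec (hM : IsPreGarside M) {Δ : M} (hΔ : IsGarsideElt Δ) (κ : M →* G)
    (hfrac : ∀ g : G, ∃ a b : M, g = κ a * (κ b)⁻¹) (g : G) :
    ∃ l : List G, l.length = lenSimple κ Δ g ∧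
      (∀ x ∈ l, ∃ d ∈ Factors Δ, x = κ d ∨ x = (κ d)⁻¹) ∧ l.prod = g := by
  have hne : {k | ∃ l : List G, l.length = k ∧
      (∀ x ∈ l, ∃ d ∈ Factors Δ, x = κ d ∨ x = (κ d)⁻¹) ∧ l.prod = g}.Nonempty := by
    obtain ⟨p, q, hpq⟩ := hfrac g
    obtain ⟨lp, hlp, rfl⟩ := exists_factorization hΔ p
    obtain ⟨lq, hlq, rfl⟩ := exists_factorization hΔ q
    refine ⟨_, lp.map κ ++ (lq.map fun t => (κ t)⁻¹).reverse, rfl, ?_, ?_⟩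
    · intro x hx
      rcases List.mem_append.mp hx with h | h
      · obtain ⟨t, ht, rfl⟩ := List.mem_map.mp h
        exact ⟨t, (factor_delta_iff hΔ).2 (hlp t ht), Or.inl rfl⟩
      · obtain ⟨t, ht, rfl⟩ := List.mem_map.mp (List.mem_reverse.mp h)
        exact ⟨t, (factor_delta_iff hΔ).2 (hlq t ht), Or.inr rfl⟩
    · rw [List.prod_append, prod_map_inv_reverse, ← map_list_prod, hpq]
  exact Nat.sInf_mem hne

end NF

theorem leN_antisymm {M : Type*} [Monoid M] {G : Type*} [Group G] (hM : IsPreGarside M)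
    (N : Submonoid M) (κ : M →* G)
    (h3 : ∀ a b c d : M, κ a * (κ b)⁻¹ = κ c * (κ d)⁻¹ →
      ∃ u v, a * u = c * v ∧ b * u = d * v)
    {x y : G} (hxy : leN κ N x y) (hyx : leN κ N y x) : x = y := by
  obtain ⟨a₁, b₁, a₂, b₂, nfx, nfy, h₁, h₁N, h₂, h₂N, α, hα, hb, D, hD1, hD2⟩ := hxy
  obtain ⟨a₁', b₁', a₂', b₂', nfy', nfx', k₁, k₁N, k₂, k₂N, β, hβ, hb', E, hE1, hE2⟩ := hyx
  obtain ⟨ea, eb⟩ := nf_unique hM κ h3 nfy' nfy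
  obtain ⟨ea', eb'⟩ := nf_unique hM κ h3 nfx' nfx
  subst ea; subst eb; subst ea'; subst eb'
  -- now: nfx : NF x a₂' b₂', nfy : NF y a₁' b₁',
  -- hα : a₁' = a₂' * α, hβ : a₂' = a₁' * β,
  -- hb : h₂ * b₁' = h₁ * b₂' * α, hb' : k₂ * b₂' = k₁ * b₁' * β
  have hαβ : α * β = 1 := by
    have h4 : a₂' * (α * β) = a₂' * 1 := by rw [mul_one, ← mul_assoc, ← hα, ← hβ]
    exact canL hM h4
  have hα1 : α = 1 := (mul_eq_one_parts hM hαβ).1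
  have hβ1 : β = 1 := (mul_eq_one_parts hM hαβ).2
  rw [hα1, mul_one] at hb
  rw [hβ1, mul_one] at hb'
  have step : ∀ (p q r t D : M), q * t = p * r → IsGcdL q p D →
      IsGcdL q (p * r) D → ∃ e, t = e * r := by
    intro p q r t D heq hD1 hD2
    have hh2 : LDvd q (p * r) := ⟨t, heq.symm⟩
    have hh2D : LDvd q D := hD2.2.2 q (LDvd.refl q) hh2
    obtain ⟨f, hf⟩ := hh2D.trans hD1.2.1
    refine ⟨f, canL hM (c := q) ?_⟩
    rw [heq, hf, mul_assoc]
  obtain ⟨e, he⟩ := step h₁ h₂ b₂' b₁' D hb hD1 hD2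
  obtain ⟨f, hf⟩ := step k₁ k₂ b₁' b₂' E hb' hE1 hE2
  have hef : (e * f) * b₁' = 1 * b₁' := by rw [one_mul, mul_assoc, ← hf, ← he]
  have he1 : e = 1 := (mul_eq_one_parts hM (canR hM hef)).1
  have hb12 : b₂' = b₁' := by rw [he, he1, one_mul]
  have ha12 : a₂' = a₁' := by rw [hβ, hβ1, mul_one]
  rw [nfx.1, nfy.1, ha12, hb12]

/-- **Theorem 4.4 (4).** For a Garside monoid `M` with Garside element `Δ`, a parabolic
submonoid `N` with Garside element `Δ_N` satisfying `Div Δ_N = Div Δ ∩ N`: every left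
coset `g G(N)` has a unique minimal element `m_N(g)` for `≤_N`, and moreover
`m_N(g) = φ_g(Δ_N^{|g|})`. -/
theorem theorem_4_4_minimal {M : Type} [Monoid M] (hM : IsPreGarside M) (Δ : M)
    (hΔ : IsGarsideElt Δ) (N : Submonoid M) (hN : IsParabolic N) (ΔN : M)
    (hΔN : IsGarsideEltIn N ΔN) (hdiv : FactorsIn N ΔN = Factors Δ ∩ (N : Set M))
    {G : Type} [Group G] (κ : M →* G) (hκ : IsEnvelopingGroup M G κ) :
    ∀ g : G,
      (∃! m : G, g⁻¹ * m ∈ Subgroup.closure (κ '' (N : Set M)) ∧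
        ∀ x : G, g⁻¹ * x ∈ Subgroup.closure (κ '' (N : Set M)) → leN κ N x m → x = m) ∧
      ∀ m : G, (g⁻¹ * m ∈ Subgroup.closure (κ '' (N : Set M)) ∧
          ∀ x : G, g⁻¹ * x ∈ Subgroup.closure (κ '' (N : Set M)) → leN κ N x m → x = m) →
        PhiSpec κ Δ ΔN g (ΔN ^ lenSimple κ Δ g) m := by
  obtain ⟨hinj, hfrac, h3⟩ := frac_facts hM hΔ κ hκ
  intro g
  obtain ⟨p₀, q₀, hpq₀⟩ := hfrac g
  obtain ⟨a, b, e₀, -, -, hnf⟩ := exists_nf_of_frac hM κ hpq₀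
  have hhN : ΔN ^ lenSimple κ Δ g ∈ N := N.pow_mem hΔN.1 _
  obtain ⟨c, hc⟩ := exists_isGcdR hM a (ΔN ^ lenSimple κ Δ g * b)
  obtain ⟨a₀, ha₀⟩ := hc.1
  obtain ⟨y, hy⟩ := hc.2.1
  obtain ⟨d, hd⟩ := exists_isGcdL hM y (ΔN ^ lenFactors Δ y)
  obtain ⟨z, hz⟩ := hd.1
  have hdN : d ∈ N := by
    obtain ⟨w, hw⟩ := hd.2.1
    exact (hN.1 d w (by rw [← hw]; exact N.pow_mem hΔN.1 _)).1
  set mφ : G := κ a * (κ c)⁻¹ * (κ z)⁻¹ with hmφ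
  have hmφ' : mφ = κ a₀ * (κ z)⁻¹ := by
    rw [hmφ, ha₀, map_mul]; group
  have hcoay : ∀ t, RDvd t a₀ → RDvd t y → t = 1 := by
    rintro t ⟨s, hs⟩ ⟨r, hr⟩
    have h1 : RDvd (t * c) a := ⟨s, by rw [ha₀, hs, mul_assoc]⟩
    have h2 : RDvd (t * c) (ΔN ^ lenSimple κ Δ g * b) := ⟨r, by rw [hy, hr, mul_assoc]⟩
    obtain ⟨w, hw⟩ := hc.2.2 _ h1 h2
    have h4 : (w * t) * c = 1 * c := by rw [one_mul, mul_assoc, ← hw]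
    exact (mul_eq_one_parts hM (canR hM h4)).2
  have hnfφ : NormalForm κ mφ a₀ z := by
    refine ⟨hmφ', ?_⟩
    intro t hta htz
    exact hcoay t hta (htz.trans ⟨d, hz⟩)
  have hzfree : ∀ n, n ∈ N → LDvd n z → n = 1 := by
    rintro n hnN ⟨z', hz'⟩
    have h1 : LDvd (d * n) y := ⟨z', by rw [hz, hz', mul_assoc]⟩
    have h2 : LDvd (d * n) (Δ ^ lenFactors Δ y) := h1.trans (ldvd_pow_lenFactors hM hΔ y)
    have h3' : LDvd (d * n) (ΔN ^ lenFactors Δ y) :=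
      claimB hM hΔ hN hΔN hdiv (N.mul_mem hdN hnN) h2
    obtain ⟨w, hw⟩ := hd.2.2 _ h1 h3'
    have h4 : d * (n * w) = d * 1 := by rw [mul_one, ← mul_assoc, ← hw]
    exact (mul_eq_one_parts hM (canL hM h4)).1
  have hdzc : d * (z * c) = ΔN ^ lenSimple κ Δ g * b := by
    rw [← mul_assoc, ← hz, ← hy]
  have hmem : g⁻¹ * mφ = (κ (ΔN ^ lenSimple κ Δ g))⁻¹ * κ d := by
    have key : ∀ W : M, κ W * κ b = κ d * (κ z * κ c) → g⁻¹ * mφ = (κ W)⁻¹ * κ d := by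
      intro W e1
      rw [hnf.1, hmφ]
      calc (κ a * (κ b)⁻¹)⁻¹ * (κ a * (κ c)⁻¹ * (κ z)⁻¹)
          = κ b * ((κ c)⁻¹ * (κ z)⁻¹) := by group
        _ = (κ W)⁻¹ * (κ W * κ b) * ((κ c)⁻¹ * (κ z)⁻¹) := by group
        _ = (κ W)⁻¹ * (κ d * (κ z * κ c)) * ((κ c)⁻¹ * (κ z)⁻¹) := by rw [e1]
        _ = (κ W)⁻¹ * κ d := by group
    refine key _ ?_
    have h5 := congrArg κ hdzc
    simpa only [map_mul] using h5.symm
  have hmemH : g⁻¹ * mφ ∈ Subgroup.closure (κ '' (N : Set M)) := by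
    rw [hmem]
    exact mul_mem (inv_mem (Subgroup.subset_closure ⟨ΔN ^ lenSimple κ Δ g, hhN, rfl⟩))
      (Subgroup.subset_closure ⟨d, hdN, rfl⟩)
  have hra : rIdx Δ a ≤ lenSimple κ Δ g := by
    obtain ⟨l, hlen, hmem', hprod⟩ := lenSimple_spec hM hΔ κ hfrac g
    have hb1 := len_bound hM hΔ κ hinj hfrac h3 l
      (fun x hx => by
        obtain ⟨d', hd', hc'⟩ := hmem' x hx
        exact ⟨d', (factor_delta_iff hΔ).1 hd', hc'⟩)
      a b (by rw [hprod]; exact hnf)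
    rw [hlen] at hb1
    exact hb1.1
  have hSAT : ∀ s' K', RDvd s' a → RDvd s' (ΔN ^ K' * b) →
      RDvd s' (ΔN ^ lenSimple κ Δ g * b) := by
    intro s' K' hsa hsb
    obtain ⟨L, hL⟩ := exists_isLcmR hM hΔ s' b
    obtain ⟨u, hu⟩ := hL.2.1
    have hLd : RDvd L (ΔN ^ K' * b) := hL.2.2 _ hsb (rdvd_mul b (ΔN ^ K'))
    have huN : u ∈ N := by
      obtain ⟨w, hw⟩ := hLd
      have h1 : ΔN ^ K' = w * u := canR hM (d := b) (by rw [mul_assoc, ← hu, ← hw])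
      exact (hN.1 w u (by rw [← h1]; exact N.pow_mem hΔN.1 K')).2
    obtain ⟨w₂, hw₂⟩ := exists_sigma_pow hM hΔ b (rIdx Δ s')
    have hsw : RDvd s' (Δ ^ rIdx Δ s' * b) :=
      (pow_bal_LR hM hΔ (rIdx_spec hM hΔ s')).trans ⟨w₂, hw₂⟩
    have hLd2 : RDvd L (Δ ^ rIdx Δ s' * b) := hL.2.2 _ hsw (rdvd_mul b _)
    have huΔ : RDvd u (Δ ^ rIdx Δ s') := by
      obtain ⟨w, hw⟩ := hLd2
      exact ⟨w, canR hM (d := b) (by rw [mul_assoc, ← hu, ← hw])⟩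
    have huΔN : RDvd u (ΔN ^ rIdx Δ s') := claimB_R hM hΔ hN hΔN hdiv huN huΔ
    have h1 : RDvd s' (u * b) := hu ▸ hL.1
    have h2 : RDvd (u * b) (ΔN ^ rIdx Δ s' * b) := by
      obtain ⟨v, hv⟩ := huΔN
      exact ⟨v, by rw [hv, mul_assoc]⟩
    have h3' : RDvd (ΔN ^ rIdx Δ s' * b) (ΔN ^ lenSimple κ Δ g * b) := by
      have hrK : rIdx Δ s' ≤ lenSimple κ Δ g := le_trans (rIdx_mono_R hM hΔ hsa) hra
      exact ⟨ΔN ^ (lenSimple κ Δ g - rIdx Δ s'), by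
        rw [← mul_assoc, ← pow_add]; congr 2; omega⟩
    exact (h1.trans h2).trans h3'
  have hP6a : ∀ n, n ∈ N → ∀ t, RDvd t a₀ → RDvd t (n * z) → t = 1 := by
    rintro n hnN t ⟨s, hs⟩ ⟨r', hr'⟩
    obtain ⟨j, hj⟩ := exists_rdvd_powN hM hN hΔN hnN
    have h1 : RDvd (t * c) a := ⟨s, by rw [ha₀, hs, mul_assoc]⟩
    have h2 : RDvd (t * c) (n * (z * c)) := ⟨r', by rw [← mul_assoc, hr', mul_assoc]⟩
    obtain ⟨d', hd'N, hd''⟩ := exists_sigmaN_pow hM hN hΔN hdN j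
    obtain ⟨v, hv⟩ := hj
    have h4 : RDvd (n * (z * c)) (ΔN ^ (j + lenSimple κ Δ g) * b) := by
      refine ⟨d' * v, ?_⟩
      calc ΔN ^ (j + lenSimple κ Δ g) * b
          = ΔN ^ j * (ΔN ^ lenSimple κ Δ g * b) := by rw [pow_add, mul_assoc]
        _ = ΔN ^ j * (d * (z * c)) := by rw [← hdzc]
        _ = (ΔN ^ j * d) * (z * c) := by rw [mul_assoc]
        _ = (d' * ΔN ^ j) * (z * c) := by rw [hd'']
        _ = (d' * (v * n)) * (z * c) := by rw [hv]
        _ = (d' * v) * (n * (z * c)) := by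
              rw [show d' * (v * n) = d' * v * n from (mul_assoc d' v n).symm, mul_assoc]
    have h5 : RDvd (t * c) (ΔN ^ lenSimple κ Δ g * b) :=
      hSAT (t * c) (j + lenSimple κ Δ g) h1 (h2.trans h4)
    obtain ⟨w, hw⟩ := hc.2.2 _ h1 h5
    have h6 : (w * t) * c = 1 * c := by rw [one_mul, mul_assoc, ← hw]
    exact (mul_eq_one_parts hM (canR hM h6)).2
  have hleast : ∀ x : G, g⁻¹ * x ∈ Subgroup.closure (κ '' (N : Set M)) → leN κ N mφ x := by
    intro x hx
    have hwH : mφ⁻¹ * x ∈ Subgroup.closure (κ '' (N : Set M)) := by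
      have hrw : mφ⁻¹ * x = (g⁻¹ * mφ)⁻¹ * (g⁻¹ * x) := by group
      rw [hrw]; exact mul_mem (inv_mem hmemH) hx
    obtain ⟨h₁, h₁N, h₂, h₂N, hw⟩ := mem_H hM hΔ hN κ hwH
    obtain ⟨γ, δ, hγδ⟩ := exists_common_right_mul hM hΔ (h₁ * z) h₂
    have hx' : x = mφ * ((κ h₁)⁻¹ * κ h₂) := by rw [← hw]; group
    have hxfrac : x = κ (a₀ * γ) * (κ δ)⁻¹ := by
      have e1 : κ h₁ * κ z * κ γ = κ h₂ * κ δ := by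
        have h5 := congrArg κ hγδ
        simpa only [map_mul] using h5
      have e2 : κ a₀ * κ γ * (κ δ)⁻¹ = κ a₀ * (κ z)⁻¹ * ((κ h₁)⁻¹ * κ h₂) := by
        calc κ a₀ * κ γ * (κ δ)⁻¹
            = κ a₀ * (κ z)⁻¹ * ((κ h₁)⁻¹ * (κ h₁ * κ z * κ γ)) * (κ δ)⁻¹ := by group
          _ = κ a₀ * (κ z)⁻¹ * ((κ h₁)⁻¹ * (κ h₂ * κ δ)) * (κ δ)⁻¹ := by rw [e1]
          _ = κ a₀ * (κ z)⁻¹ * ((κ h₁)⁻¹ * κ h₂) := by group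
      rw [hx', hmφ', map_mul, e2]
    obtain ⟨a₂, b₂, e, hae, hbe, hnfx⟩ := exists_nf_of_frac hM κ hxfrac
    have heγ : RDvd e γ := by
      have k1 : RDvd e (a₀ * γ) := ⟨a₂, hae⟩
      have k2 : RDvd e (h₁ * z * γ) := by
        rw [hγδ]
        exact ⟨h₂ * b₂, by rw [hbe, ← mul_assoc]⟩
      obtain ⟨w, hwg⟩ := exists_isGcdR hM (a₀ * γ) (h₁ * z * γ)
      have hγw : RDvd γ w := hwg.2.2 γ (rdvd_mul γ a₀) (rdvd_mul γ (h₁ * z))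
      obtain ⟨w', hw'⟩ := hγw
      have hw'a : RDvd w' a₀ := by
        obtain ⟨s, hs⟩ := hwg.1
        refine ⟨s, canR hM (d := γ) ?_⟩
        conv_rhs => rw [mul_assoc, ← hw', ← hs]
      have hw'h : RDvd w' (h₁ * z) := by
        obtain ⟨s, hs⟩ := hwg.2.1
        refine ⟨s, canR hM (d := γ) ?_⟩
        conv_rhs => rw [mul_assoc, ← hw', ← hs]
      have hw'1 : w' = 1 := hP6a h₁ h₁N w' hw'a hw'h
      have hwγ : w = γ := by rw [hw', hw'1, one_mul]
      exact hwγ ▸ hwg.2.2 e k1 k2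
    obtain ⟨γ', hγ'⟩ := heγ
    have ha₂ : a₂ = a₀ * γ' := canR hM (d := e) (by rw [← hae, hγ', mul_assoc])
    have hbeq : h₂ * b₂ = h₁ * z * γ' := by
      refine canR hM (d := e) ?_
      calc h₂ * b₂ * e = h₂ * δ := by rw [mul_assoc, ← hbe]
        _ = h₁ * z * γ := hγδ.symm
        _ = h₁ * z * (γ' * e) := by rw [hγ']
        _ = h₁ * z * γ' * e := by simp only [mul_assoc]
    obtain ⟨D, hD⟩ := exists_isGcdL hM h₂ h₁
    have hD2 : IsGcdL h₂ (h₁ * z) D := by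
      refine ⟨hD.1, hD.2.1.trans (ldvd_mul h₁ z), ?_⟩
      intro t ht2 ht1z
      have htN : t ∈ N := by
        obtain ⟨s, hs⟩ := ht2
        exact (hN.1 t s (by rw [← hs]; exact h₂N)).1
      obtain ⟨m, hm⟩ := exists_isLcmL hM hΔ t h₁
      have hmN : m ∈ N := hN.2.1 t h₁ m htN h₁N hm
      obtain ⟨u, hu⟩ := hm.2.1
      have huN : u ∈ N := (hN.1 h₁ u (by rw [← hu]; exact hmN)).2
      have hmz : LDvd m (h₁ * z) := hm.2.2 _ ht1z (ldvd_mul h₁ z)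
      have huz : LDvd u z := by
        obtain ⟨s, hs⟩ := hmz
        exact ⟨s, canL hM (c := h₁) (by rw [hs, hu, mul_assoc])⟩
      have hu1 : u = 1 := hzfree u huN huz
      have htm : LDvd t h₁ := by
        have hmh : m = h₁ := by rw [hu, hu1, mul_one]
        exact hmh ▸ hm.1
      exact hD.2.2 t ht2 htm
    exact ⟨a₀, z, a₂, b₂, hnfφ, hnfx, h₁, h₁N, h₂, h₂N, γ', ha₂, hbeq, D, hD, hD2⟩
  have huniq : ∀ m' : G, (g⁻¹ * m' ∈ Subgroup.closure (κ '' (N : Set M)) ∧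
      ∀ x : G, g⁻¹ * x ∈ Subgroup.closure (κ '' (N : Set M)) → leN κ N x m' → x = m') →
      m' = mφ := by
    intro m' hm'
    exact (hm'.2 mφ hmemH (hleast m' hm'.1)).symm
  constructor
  · refine ⟨mφ, ⟨hmemH, ?_⟩, huniq⟩
    intro x hx hle
    exact leN_antisymm hM N κ h3 hle (hleast x hx)
  · intro m hm
    rw [huniq m hm]
    exact ⟨a, b, c, y, d, z, hnf, hc, hy, hd, hz, hmφ⟩

end PG
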